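/- Let F be a linearly ordered field, let A, B, C be magnitudes of F and a, b, c ∈ F, giving cosets α = a + A, β = b + B, γ = c + C. Define the product of cosets by α ⊙ β = {a·b} + a • B + b • A + A * B (and similarly for the other pairs). Then the adapted distributive law holds: α ⊙ β + α ⊙ γ = α ⊙ (β + γ) + (b • A + A * B) + (c • A + A * C), where β + γ is the Minkowski sum (b + c) + (B + C) and A ⊙ β = b • A + A * B, A ⊙ γ = c • A + A * C are the correction terms. -/

import Mathlib

open Pointwise

/-- A *magnitude* of a linearly ordered field `F` is an order-convex additive subgroup of `F`,
given as a set: it contains `0`, is closed under addition and negation, and is order-convex. -/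
def IsMagnitude {F : Type*} [Field F] [LinearOrder F] [IsStrictOrderedRing F] (A : Set F) : Prop :=
  (0 : F) ∈ A ∧ (∀ x ∈ A, ∀ y ∈ A, x + y ∈ A) ∧ (∀ x ∈ A, -x ∈ A) ∧
    (∀ x ∈ A, ∀ y ∈ A, ∀ z : F, x ≤ z → z ≤ y → z ∈ A)

/-- Order relation on subsets of `F`: `S ≤ T` iff every element of `S` is below some element of `T`. -/
def SetLE {F : Type*} [Field F] [LinearOrder F] [IsStrictOrderedRing F] (S T : Set F) : Prop :=
  ∀ x ∈ S, ∃ y ∈ T, x ≤ y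

section Aux

variable {F : Type*} [Field F] [LinearOrder F] [IsStrictOrderedRing F]

lemma IsMagnitude.abs_mem {A : Set F} (hA : IsMagnitude A) {x : F} (hx : x ∈ A) : |x| ∈ A := by
  rcases abs_choice x with h | h <;> rw [h]
  exacts [hx, hA.2.2.1 x hx]

lemma IsMagnitude.mem_of_abs_le {A : Set F} (hA : IsMagnitude A) {x w : F} (hw : w ∈ A)
    (h : |x| ≤ w) : x ∈ A :=
  hA.2.2.2 (-w) (hA.2.2.1 w hw) w hw x (neg_le_of_abs_le h) (le_of_abs_le h)

lemma smul_mag_add_self {A : Set F} (hA : IsMagnitude A) (b : F) :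
    b • A + b • A = b • A := by
  apply Set.Subset.antisymm
  · rintro _ ⟨_, ⟨x, hx, rfl⟩, _, ⟨y, hy, rfl⟩, rfl⟩
    exact ⟨x + y, hA.2.1 x hx y hy, by simp [smul_eq_mul, mul_add]⟩
  · intro z hz
    exact ⟨z, hz, 0, ⟨0, hA.1, smul_zero b⟩, add_zero z⟩

lemma mul_mag_add_self {A B : Set F} (hA : IsMagnitude A) (hB : IsMagnitude B) :
    A * B + A * B = A * B := by
  apply Set.Subset.antisymm
  · rintro _ ⟨_, ⟨x₁, hx₁, y₁, hy₁, rfl⟩, _, ⟨x₂, hx₂, y₂, hy₂, rfl⟩, rfl⟩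
    set m : F := max |x₁| |x₂| with hm
    have hmA : m ∈ A := by
      rcases max_cases |x₁| |x₂| with ⟨h, _⟩ | ⟨h, _⟩ <;> rw [hm, h]
      exacts [hA.abs_mem hx₁, hA.abs_mem hx₂]
    have hwB : |y₁| + |y₂| ∈ B := hB.2.1 _ (hB.abs_mem hy₁) _ (hB.abs_mem hy₂)
    have hm0 : 0 ≤ m := le_trans (abs_nonneg x₁) (le_max_left _ _)
    rcases eq_or_lt_of_le hm0 with hmz | hmpos
    · have hx₁0 : x₁ = 0 := by
        have h1 : |x₁| ≤ 0 := by rw [hmz]; exact le_max_left _ _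
        exact abs_eq_zero.mp (le_antisymm h1 (abs_nonneg x₁))
      have hx₂0 : x₂ = 0 := by
        have h1 : |x₂| ≤ 0 := by rw [hmz]; exact le_max_right _ _
        exact abs_eq_zero.mp (le_antisymm h1 (abs_nonneg x₂))
      refine ⟨0, hA.1, 0, hB.1, ?_⟩
      rw [hx₁0, hx₂0]; ring
    · have hbound : |x₁ * y₁ + x₂ * y₂| ≤ m * (|y₁| + |y₂|) := by
        have h1 : |x₁ * y₁ + x₂ * y₂| ≤ |x₁| * |y₁| + |x₂| * |y₂| := by
          calc |x₁ * y₁ + x₂ * y₂| ≤ |x₁ * y₁| + |x₂ * y₂| := abs_add_le _ _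
          _ = |x₁| * |y₁| + |x₂| * |y₂| := by rw [abs_mul, abs_mul]
        have h2 : |x₁| * |y₁| ≤ m * |y₁| :=
          mul_le_mul_of_nonneg_right (le_max_left _ _) (abs_nonneg _)
        have h3 : |x₂| * |y₂| ≤ m * |y₂| :=
          mul_le_mul_of_nonneg_right (le_max_right _ _) (abs_nonneg _)
        calc |x₁ * y₁ + x₂ * y₂| ≤ |x₁| * |y₁| + |x₂| * |y₂| := h1
        _ ≤ m * |y₁| + m * |y₂| := add_le_add h2 h3
        _ = m * (|y₁| + |y₂|) := (mul_add m _ _).symm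
      have hzB : (x₁ * y₁ + x₂ * y₂) / m ∈ B := by
        apply hB.mem_of_abs_le hwB
        rw [abs_div, abs_of_pos hmpos, div_le_iff₀ hmpos]
        linarith [hbound]
      exact ⟨m, hmA, (x₁ * y₁ + x₂ * y₂) / m, hzB, by field_simp⟩
  · intro z hz
    exact ⟨z, hz, 0, ⟨0, hA.1, 0, hB.1, mul_zero 0⟩, add_zero z⟩

end Aux

theorem adapted_distributivity {F : Type*} [Field F] [LinearOrder F] [IsStrictOrderedRing F]
    (A B C : Set F) (hA : IsMagnitude A) (hB : IsMagnitude B) (hC : IsMagnitude C)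
    (a b c : F) :
    ({a * b} + a • B + b • A + A * B) + ({a * c} + a • C + c • A + A * C) =
      ({a * (b + c)} + a • (B + C) + (b + c) • A + A * (B + C)) +
        (b • A + A * B) + (c • A + A * C) := by
  have h0bc : (0 : F) ∈ (b + c) • A := ⟨0, hA.1, smul_zero _⟩
  have h0ABC : (0 : F) ∈ A * (B + C) :=
    ⟨0, hA.1, 0, ⟨0, hB.1, 0, hC.1, add_zero 0⟩, mul_zero 0⟩
  have key : (b + c) • A + A * (B + C) + ((b • A + A * B) + (c • A + A * C)) =
      (b • A + A * B) + (c • A + A * C) := by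
    apply Set.Subset.antisymm
    · have hsub1 : (b + c) • A ⊆ b • A + c • A := by
        rintro _ ⟨x, hx, rfl⟩
        exact ⟨b • x, ⟨x, hx, rfl⟩, c • x, ⟨x, hx, rfl⟩, (add_smul b c x).symm⟩
      have hsub2 : A * (B + C) ⊆ A * B + A * C := by
        rintro _ ⟨x, hx, _, ⟨y, hy, z, hz, rfl⟩, rfl⟩
        exact ⟨x * y, Set.mul_mem_mul hx hy, x * z, Set.mul_mem_mul hx hz, (mul_add x y z).symm⟩
      calc (b + c) • A + A * (B + C) + ((b • A + A * B) + (c • A + A * C))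
          ⊆ (b • A + c • A) + (A * B + A * C) + ((b • A + A * B) + (c • A + A * C)) :=
            Set.add_subset_add (Set.add_subset_add hsub1 hsub2) subset_rfl
        _ = (b • A + b • A) + (A * B + A * B) + ((c • A + c • A) + (A * C + A * C)) := by abel
        _ = (b • A + A * B) + (c • A + A * C) := by
            rw [smul_mag_add_self hA b, smul_mag_add_self hA c,
              mul_mag_add_self hA hB, mul_mag_add_self hA hC]
    · intro x hx
      exact ⟨0, ⟨0, h0bc, 0, h0ABC, add_zero 0⟩, x, hx, zero_add x⟩
  calc ({a * b} + a • B + b • A + A * B) + ({a * c} + a • C + c • A + A * C)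
      = ({a * b} + {a * c} + (a • B + a • C)) +
        ((b • A + A * B) + (c • A + A * C)) := by abel
    _ = ({a * b} + {a * c} + (a • B + a • C)) +
        ((b + c) • A + A * (B + C) + ((b • A + A * B) + (c • A + A * C))) := by rw [key]
    _ = ({a * b + a * c} + (a • B + a • C) + (b + c) • A + A * (B + C)) +
        (b • A + A * B) + (c • A + A * C) := by rw [Set.singleton_add_singleton]; abel
    _ = ({a * (b + c)} + a • (B + C) + (b + c) • A + A * (B + C)) +
        (b • A + A * B) + (c • A + A * C) := by rw [mul_add a b c, smul_add]
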